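/- Let G be a profinite group and M an abelian group with discrete G-action via continuous maps. The functor sending a discrete G-module N to Map_c(G, N)^H (continuous maps G → N fixed by an open subgroup H, with the translation action) is exact as a functor from discrete G-modules to abelian groups. -/

import Mathlib

variable {G : Type*} [Group G] [TopologicalSpace G]

/-- For a profinite group `G`, an open subgroup `H ≤ G` and a discrete `G`-module `N`, the
predicate on `θ : G → N` of lying in `Map_c(G, N)^H`: the stabilizer of `θ` for the
translation action `(g • θ) g' = θ (g' * g)` is open (i.e. `θ` is continuous for `N`
discrete), and `θ` is fixed by every element of `H`. -/
def MapcH (H : Subgroup G) {N : Type*} (θ : G → N) : Prop :=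
  IsOpen {g : G | ∀ g' : G, θ (g' * g) = θ g'} ∧
    ∀ h ∈ H, ∀ g' : G, θ (g' * h) = θ g'


/-- The stabilizer of `θ` under the right-translation action, as a subgroup. -/
def stabSG {N : Type*} (θ : G → N) : Subgroup G where
  carrier := {g : G | ∀ g' : G, θ (g' * g) = θ g'}
  one_mem' := by intro g'; simp
  mul_mem' := by
    intro a b ha hb g'
    rw [← mul_assoc, hb, ha]
  inv_mem' := by
    intro a ha g'
    have := ha (g' * a⁻¹)
    rw [inv_mul_cancel_right] at this
    exact this.symm

theorem stabSG_open_mono [IsTopologicalGroup G] {N M : Type*} (θ : G → N) (θ' : G → M)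
    (h : ∀ g : G, (∀ g' : G, θ (g' * g) = θ g') → ∀ g' : G, θ' (g' * g) = θ' g')
    (ho : IsOpen {g : G | ∀ g' : G, θ (g' * g) = θ g'}) :
    IsOpen {g : G | ∀ g' : G, θ' (g' * g) = θ' g'} := by
  have : IsOpen ((stabSG θ' : Subgroup G) : Set G) :=
    Subgroup.isOpen_mono (H₁ := stabSG θ) (H₂ := stabSG θ') h ho
  exact this


/-- For a profinite group `G` and an open subgroup `H`, the functor `N ↦ Map_c(G, N)^H` is
exact on discrete `G`-modules: it preserves short exact sequences.  Given a short exact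
sequence `0 → N₁ → N₂ → N₃ → 0` of discrete `G`-modules, the induced sequence
`0 → Map_c(G,N₁)^H → Map_c(G,N₂)^H → Map_c(G,N₃)^H → 0` is exact. -/
theorem stmt11 [IsTopologicalGroup G] [CompactSpace G] [T2Space G]
    [TotallyDisconnectedSpace G]
    (H : Subgroup G) (hH : IsOpen (H : Set G))
    {N₁ N₂ N₃ : Type*} [AddCommGroup N₁] [AddCommGroup N₂] [AddCommGroup N₃]
    [DistribMulAction G N₁] [DistribMulAction G N₂] [DistribMulAction G N₃]
    (hd₁ : ∀ n : N₁, IsOpen ((MulAction.stabilizer G n : Subgroup G) : Set G))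
    (hd₂ : ∀ n : N₂, IsOpen ((MulAction.stabilizer G n : Subgroup G) : Set G))
    (hd₃ : ∀ n : N₃, IsOpen ((MulAction.stabilizer G n : Subgroup G) : Set G))
    (f : N₁ →+ N₂) (g : N₂ →+ N₃)
    (hfG : ∀ (γ : G) (x : N₁), f (γ • x) = γ • f x)
    (hgG : ∀ (γ : G) (x : N₂), g (γ • x) = γ • g x)
    (hfinj : Function.Injective f) (hgsurj : Function.Surjective g)
    (hexact : ∀ y : N₂, g y = 0 ↔ ∃ x : N₁, f x = y) :
    (∀ θ : G → N₁, MapcH H θ → MapcH H (fun γ => f (θ γ))) ∧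
    (∀ θ : G → N₂, MapcH H θ → MapcH H (fun γ => g (θ γ))) ∧
    (∀ θ θ' : G → N₁, MapcH H θ → MapcH H θ' →
      (fun γ => f (θ γ)) = (fun γ => f (θ' γ)) → θ = θ') ∧
    (∀ θ₂ : G → N₂, MapcH H θ₂ →
      (((fun γ => g (θ₂ γ)) = fun _ => 0) ↔
        ∃ θ₁ : G → N₁, MapcH H θ₁ ∧ (fun γ => f (θ₁ γ)) = θ₂)) ∧
    (∀ θ₃ : G → N₃, MapcH H θ₃ →
      ∃ θ₂ : G → N₂, MapcH H θ₂ ∧ (fun γ => g (θ₂ γ)) = θ₃) := by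
  refine ⟨?_, ?_, ?_, ?_, ?_⟩
  · rintro θ ⟨ho, hi⟩
    exact ⟨stabSG_open_mono θ (fun γ => f (θ γ)) (fun g hg g' => congrArg f (hg g')) ho,
      fun h hh g' => congrArg f (hi h hh g')⟩
  · rintro θ ⟨ho, hi⟩
    exact ⟨stabSG_open_mono θ (fun γ => g (θ γ)) (fun a ha g' => congrArg g (ha g')) ho,
      fun h hh g' => congrArg g (hi h hh g')⟩
  · intro θ θ' _ _ heq
    funext γ
    exact hfinj (congrFun heq γ)
  · rintro θ₂ ⟨ho, hi⟩
    constructor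
    · intro hz
      choose θ₁ hθ₁ using fun γ => (hexact (θ₂ γ)).mp (congrFun hz γ)
      have key : ∀ a b : G, (θ₁ a = θ₁ b) ↔ (θ₂ a = θ₂ b) := by
        intro a b
        constructor
        · intro h; rw [← hθ₁ a, ← hθ₁ b, h]
        · intro h; exact hfinj (by rw [hθ₁ a, hθ₁ b, h])
      refine ⟨θ₁, ⟨?_, fun h hh g' => (key _ _).mpr (hi h hh g')⟩, funext fun γ => hθ₁ γ⟩
      have hset : {g : G | ∀ g' : G, θ₁ (g' * g) = θ₁ g'}
          = {g : G | ∀ g' : G, θ₂ (g' * g) = θ₂ g'} := by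
        ext g
        exact forall_congr' fun g' => key _ _
      rw [hset]; exact ho
    · rintro ⟨θ₁, _, rfl⟩
      funext γ
      exact (hexact _).mpr ⟨θ₁ γ, rfl⟩
  · rintro θ₃ ⟨ho, hi⟩
    have hgs : ∀ n, g (Function.surjInv hgsurj n) = n := Function.surjInv_eq hgsurj
    refine ⟨fun γ => Function.surjInv hgsurj (θ₃ γ),
      ⟨stabSG_open_mono θ₃ (fun γ => Function.surjInv hgsurj (θ₃ γ))
          (fun a ha g' => congrArg _ (ha g')) ho,
        fun h hh g' => congrArg _ (hi h hh g')⟩,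
      funext fun γ => hgs _⟩
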